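/- arXiv:1407.8252 — 2 statements merged into one kernel-verified Lean document; each statement's English description precedes it below -/
import Mathlib

section
/- Fix g > 0 and define g_c = inf{ z > √(1+g²) : there exists Σ > Σ_z with f_z(Σ) = 0 }. Then g_c is well-defined (the set is nonempty), and: (a) for every z > g_c there exists a unique Σ_c = Σ_{c,z} > Σ_z with f_z(Σ_c) = 0; (b) for every 0 < z < g_c, no such Σ_c exists, and f_z(Σ) > 0 for all Σ ≥ Σ_z. -/
open Set


/-- The critical total concentration Σ_z: the unique positive solution of
Σ = 2·e^{−(g+z)Σ/2} (equivalently Σ² = 4·e^{−(g+z)Σ}). -/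
noncomputable def sigmaZ (g z : ℝ) : ℝ :=
  sInf {S : ℝ | 0 < S ∧ S = 2 * Real.exp (-((g + z) * S) / 2)}

/-- f_z(Σ) = (1 + gΣ)·e^{(g+z)Σ} + g² − z². -/
noncomputable def fz (g z S : ℝ) : ℝ :=
  (1 + g * S) * Real.exp ((g + z) * S) + g ^ 2 - z ^ 2

/-- g_c = inf { z > √(1+g²) : ∃ Σ > Σ_z with f_z(Σ) = 0 }. -/
noncomputable def gcConst (g : ℝ) : ℝ :=
  sInf {z : ℝ | Real.sqrt (1 + g ^ 2) < z ∧ ∃ S : ℝ, sigmaZ g z < S ∧ fz g z S = 0}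

lemma sigmaZ_spec (g z : ℝ) (hc : 0 < g + z) :
    0 < sigmaZ g z ∧ sigmaZ g z < 2 ∧
      sigmaZ g z = 2 * Real.exp (-((g + z) * sigmaZ g z) / 2) := by
  set u : ℝ → ℝ := fun S => S - 2 * Real.exp (-((g + z) * S) / 2) with hu'
  have hu : StrictMono u := by
    intro a b hab
    have h1 : -((g + z) * b) / 2 < -((g + z) * a) / 2 := by nlinarith
    have h2 := Real.exp_lt_exp.mpr h1
    simp only [hu']
    nlinarith
  have hcont : Continuous u := by fun_prop
  have h0 : u 0 = -2 := by simp [hu']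
  have h2 : 0 < u 2 := by
    have hlt : Real.exp (-((g + z) * 2) / 2) < 1 := by
      rw [Real.exp_lt_one_iff]; nlinarith
    simp only [hu']; nlinarith
  obtain ⟨S0, hS0mem, hS0⟩ : ∃ S0 ∈ Ioo (0:ℝ) 2, u S0 = 0 := by
    have him := intermediate_value_Ioo (by norm_num : (0:ℝ) ≤ 2) hcont.continuousOn
    have h01 : (0:ℝ) ∈ Ioo (u 0) (u 2) := ⟨by rw [h0]; norm_num, h2⟩
    obtain ⟨S0, hS0mem, hS0⟩ := him h01
    exact ⟨S0, hS0mem, hS0⟩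
  have hS0eq : S0 = 2 * Real.exp (-((g + z) * S0) / 2) := by
    simp only [hu'] at hS0; linarith
  have hleast : IsLeast {S : ℝ | 0 < S ∧ S = 2 * Real.exp (-((g + z) * S) / 2)} S0 := by
    constructor
    · exact ⟨hS0mem.1, hS0eq⟩
    · rintro S ⟨hS1, hS2⟩
      have : u S = u S0 := by
        simp only [hu']; linarith [hS0eq]
      exact le_of_eq (hu.injective this).symm
  have hsig : sigmaZ g z = S0 := hleast.csInf_eq
  exact ⟨by rw [hsig]; exact hS0mem.1, by rw [hsig]; exact hS0mem.2, by rw [hsig]; exact hS0eq⟩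

lemma fz_continuous (g z : ℝ) : Continuous (fz g z) := by
  unfold fz; fun_prop

lemma fz_strictMonoOn (g z : ℝ) (hg : 0 < g) (hc : 0 < g + z) :
    StrictMonoOn (fz g z) (Set.Ici 0) := by
  have hderiv : ∀ S : ℝ, HasDerivAt (fz g z)
      (g * Real.exp ((g + z) * S) + (1 + g * S) * (Real.exp ((g + z) * S) * (g + z))) S := by
    intro S
    have h1 : HasDerivAt (fun S : ℝ => 1 + g * S) g S := by
      simpa using ((hasDerivAt_id S).const_mul g).const_add 1
    have hi : HasDerivAt (fun y : ℝ => (g + z) * y) (g + z) S := by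
      simpa using (hasDerivAt_id S).const_mul (g + z)
    have h2 : HasDerivAt (fun S : ℝ => Real.exp ((g + z) * S))
        (Real.exp ((g + z) * S) * (g + z)) S := by
      exact hi.exp
    have h3 := ((h1.mul h2).add_const (g ^ 2)).sub_const (z ^ 2)
    exact h3
  apply strictMonoOn_of_deriv_pos (convex_Ici 0) (fz_continuous g z).continuousOn
  intro x hx
  rw [interior_Ici] at hx
  rw [(hderiv x).deriv]
  have hE := Real.exp_pos ((g + z) * x)
  have hx0 : (0:ℝ) < x := hx
  have h1 : (0:ℝ) < 1 + g * x := by nlinarith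
  have h2 := mul_pos h1 (mul_pos hE hc)
  have h3 := mul_pos hg hE
  linarith

lemma mul_log_strictMonoOn : StrictMonoOn (fun t : ℝ => t * Real.log t) (Set.Ici 1) := by
  apply strictMonoOn_of_deriv_pos (convex_Ici 1)
  · apply ContinuousOn.mul continuousOn_id
    exact Real.continuousOn_log.mono (fun x hx h => by
      simp only [Set.mem_singleton_iff] at h
      rw [h] at hx; exact absurd hx (by norm_num))
  · intro x hx
    rw [interior_Ici] at hx
    have hx1 : (1:ℝ) < x := hx
    have hx0 : x ≠ 0 := by linarith
    have hd : HasDerivAt (fun t : ℝ => t * Real.log t) (Real.log x + 1) x := by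
      have h : HasDerivAt (fun t : ℝ => t * Real.log t) (1 * Real.log x + x * x⁻¹) x :=
        (hasDerivAt_id x).mul (Real.hasDerivAt_log hx0)
      convert h using 1
      field_simp
    rw [hd.deriv]
    have := Real.log_pos hx1
    linarith

noncomputable def hfun (g z : ℝ) : ℝ := (z - g) * Real.log (z - g) - (g + z)

lemma hfun_continuousOn (g : ℝ) : ContinuousOn (hfun g) (Set.Ici (g + 1)) := by
  unfold hfun
  apply ContinuousOn.sub
  · apply ContinuousOn.mul (by fun_prop)
    apply Real.continuousOn_log.comp (by fun_prop)
    intro x hx h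
    simp only [Set.mem_singleton_iff] at h
    have : g + 1 ≤ x := hx
    nlinarith [h]
  · fun_prop

lemma hfun_strictMonoOn (g : ℝ) : StrictMonoOn (hfun g) (Set.Ici (g + 1)) := by
  apply strictMonoOn_of_deriv_pos (convex_Ici _) (hfun_continuousOn g)
  intro x hx
  rw [interior_Ici] at hx
  have hxg : 1 < x - g := by
    have : g + 1 < x := hx
    linarith
  have hne : x - g ≠ 0 := by linarith
  have hd : HasDerivAt (hfun g) (Real.log (x - g)) x := by
    have h1 : HasDerivAt (fun z : ℝ => z - g) 1 x := (hasDerivAt_id x).sub_const g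
    have h2 : HasDerivAt (fun z : ℝ => Real.log (z - g)) ((x - g)⁻¹ * 1) x :=
      by simpa using h1.log hne
    have h3 : HasDerivAt (fun z : ℝ => (z - g) * Real.log (z - g))
        (1 * Real.log (x - g) + (x - g) * ((x - g)⁻¹ * 1)) x := h1.mul h2
    have h4 : HasDerivAt (fun z : ℝ => g + z) 1 x := by
      simpa using (hasDerivAt_id x).const_add g
    have h5 : HasDerivAt (fun z : ℝ => (z - g) * Real.log (z - g) - (g + z))
        (1 * Real.log (x - g) + (x - g) * ((x - g)⁻¹ * 1) - 1) x := h3.sub h4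
    have : hfun g = fun z : ℝ => (z - g) * Real.log (z - g) - (g + z) := rfl
    rw [this]
    convert h5 using 1
    rw [one_mul, mul_one, mul_inv_cancel₀ hne]; ring
  rw [hd.deriv]
  exact Real.log_pos hxg

lemma sigma_key (g z : ℝ) (hg : 0 < g) (hz : 0 < z) :
    ∃ t : ℝ, 1 < t ∧ t * Real.log t = g + z ∧
      fz g z (sigmaZ g z) = (t + g) ^ 2 - z ^ 2 := by
  have hc : 0 < g + z := by linarith
  obtain ⟨hσ0, hσ2, hσeq⟩ := sigmaZ_spec g z hc
  set σ := sigmaZ g z with hσdef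
  have hσne : σ ≠ 0 := ne_of_gt hσ0
  have hexp : Real.exp (-((g + z) * σ) / 2) = σ / 2 := by linarith
  have hlog : -((g + z) * σ) / 2 = Real.log (σ / 2) := by
    rw [← hexp, Real.log_exp]
  have hlogt : Real.log (2 / σ) = (g + z) * σ / 2 := by
    rw [show (2:ℝ) / σ = (σ / 2)⁻¹ by field_simp, Real.log_inv, ← hlog]
    ring
  refine ⟨2 / σ, ?_, ?_, ?_⟩
  · rw [lt_div_iff₀ hσ0]; linarith
  · rw [hlogt]; field_simp
  · have hexph : Real.exp ((g + z) * σ / 2) = 2 / σ := by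
      rw [show (g + z) * σ / 2 = Real.log (2 / σ) from hlogt.symm,
        Real.exp_log (by positivity)]
    have hexp2 : Real.exp ((g + z) * σ) = (2 / σ) ^ 2 := by
      rw [show (g + z) * σ = (g + z) * σ / 2 + (g + z) * σ / 2 by ring, Real.exp_add, hexph]
      ring
    show (1 + g * σ) * Real.exp ((g + z) * σ) + g ^ 2 - z ^ 2 = (2 / σ + g) ^ 2 - z ^ 2
    rw [hexp2]
    field_simp
    ring

lemma root_iff (g z : ℝ) (hg : 0 < g) (hz : 0 < z) :
    (∃ S, sigmaZ g z < S ∧ fz g z S = 0) ↔ (g + 1 < z ∧ 0 < hfun g z) := by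
  have hc : 0 < g + z := by linarith
  obtain ⟨t, ht1, htT, hfσ⟩ := sigma_key g z hg hz
  obtain ⟨hσ0, hσ2, _⟩ := sigmaZ_spec g z hc
  have hmono := fz_strictMonoOn g z hg hc
  constructor
  · rintro ⟨S, hσS, hfS⟩
    have h1 : fz g z (sigmaZ g z) < 0 := by
      have := hmono (Set.mem_Ici.mpr hσ0.le)
        (Set.mem_Ici.mpr (hσ0.le.trans hσS.le)) hσS
      rw [hfS] at this; exact this
    rw [hfσ] at h1
    have htz : t + g < z := by nlinarith
    have hz1 : 1 < z - g := by linarith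
    refine ⟨by linarith, ?_⟩
    have hT := mul_log_strictMonoOn (Set.mem_Ici.mpr ht1.le)
      (Set.mem_Ici.mpr hz1.le) (by linarith : t < z - g)
    simp only at hT
    unfold hfun
    rw [htT] at hT
    linarith
  · rintro ⟨hz1, hh⟩
    have hzg : 1 < z - g := by linarith
    have htlt : t < z - g := by
      by_contra hle
      push_neg at hle
      have hT := mul_log_strictMonoOn.monotoneOn (Set.mem_Ici.mpr hzg.le)
        (Set.mem_Ici.mpr ht1.le) hle
      unfold hfun at hh
      rw [htT] at hT
      linarith
    have hfσneg : fz g z (sigmaZ g z) < 0 := by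
      rw [hfσ]; nlinarith
    have hdivpos : 0 < z ^ 2 / g := by positivity
    have hσb : sigmaZ g z ≤ sigmaZ g z + z ^ 2 / g := by linarith
    have hb0 : 0 < sigmaZ g z + z ^ 2 / g := by linarith
    have hfb : 0 < fz g z (sigmaZ g z + z ^ 2 / g) := by
      have hE : 1 ≤ Real.exp ((g + z) * (sigmaZ g z + z ^ 2 / g)) :=
        Real.one_le_exp (by positivity)
      have hgb : g * (sigmaZ g z + z ^ 2 / g) = g * sigmaZ g z + z ^ 2 := by
        field_simp
      have h1 : 0 < 1 + g * (sigmaZ g z + z ^ 2 / g) := by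
        nlinarith [mul_pos hg hσ0, sq_nonneg z]
      have h2 := le_mul_of_one_le_right h1.le hE
      show 0 < (1 + g * (sigmaZ g z + z ^ 2 / g)) *
        Real.exp ((g + z) * (sigmaZ g z + z ^ 2 / g)) + g ^ 2 - z ^ 2
      nlinarith [mul_pos hg hσ0, sq_nonneg g]
    obtain ⟨S, hS, hfS⟩ := intermediate_value_Ioo hσb (fz_continuous g z).continuousOn
      ⟨hfσneg, hfb⟩
    exact ⟨S, hS.1, hfS⟩


/-- Proposition: g_c is well-defined (the defining set is nonempty);
(a) for every z > g_c there is a unique Σ_c > Σ_z with f_z(Σ_c) = 0;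
(b) for 0 < z < g_c no such Σ_c exists, and f_z(Σ) > 0 for all Σ ≥ Σ_z. -/
theorem stmt_10 (g : ℝ) (hg : 0 < g) :
    {z : ℝ | Real.sqrt (1 + g ^ 2) < z ∧ ∃ S : ℝ, sigmaZ g z < S ∧ fz g z S = 0}.Nonempty ∧
    (∀ z : ℝ, gcConst g < z → ∃! S : ℝ, sigmaZ g z < S ∧ fz g z S = 0) ∧
    (∀ z : ℝ, 0 < z → z < gcConst g →
      (¬ ∃ S : ℝ, sigmaZ g z < S ∧ fz g z S = 0) ∧
      ∀ S : ℝ, sigmaZ g z ≤ S → 0 < fz g z S) := by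
  have hmono := hfun_strictMonoOn g
  have hab : g + 1 ≤ g + Real.exp (2 * g + 2) := by
    nlinarith [Real.add_one_le_exp (2 * g + 2)]
  have hval1 : hfun g (g + 1) < 0 := by
    unfold hfun
    simp only [add_sub_cancel_left, Real.log_one]
    linarith
  have hval2 : 0 < hfun g (g + Real.exp (2 * g + 2)) := by
    unfold hfun
    rw [show g + Real.exp (2 * g + 2) - g = Real.exp (2 * g + 2) by ring, Real.log_exp]
    nlinarith [Real.add_one_le_exp (2 * g + 2), Real.exp_pos (2 * g + 2)]
  obtain ⟨zs, hzsmem, hzs0⟩ := intermediate_value_Ioo hab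
    ((hfun_continuousOn g).mono (Set.Icc_subset_Ici_self)) ⟨hval1, hval2⟩
  have hzs_gt : g + 1 < zs := hzsmem.1
  have hset : ∀ z : ℝ,
      (Real.sqrt (1 + g ^ 2) < z ∧ ∃ S, sigmaZ g z < S ∧ fz g z S = 0) ↔ zs < z := by
    intro z
    constructor
    · rintro ⟨hsq, hex⟩
      have hz0 : 0 < z := lt_of_le_of_lt (Real.sqrt_nonneg _) hsq
      obtain ⟨hz1', hh⟩ := (root_iff g z hg hz0).mp hex
      by_contra hle
      push_neg at hle
      have hle2 := hmono.monotoneOn (Set.mem_Ici.mpr hz1'.le)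
        (Set.mem_Ici.mpr hzs_gt.le) hle
      rw [hzs0] at hle2
      linarith
    · intro hzz
      have hz1' : g + 1 < z := lt_trans hzs_gt hzz
      have hz0 : 0 < z := by linarith
      have hh : 0 < hfun g z := by
        have := hmono (Set.mem_Ici.mpr hzs_gt.le) (Set.mem_Ici.mpr hz1'.le) hzz
        rw [hzs0] at this
        exact this
      refine ⟨?_, (root_iff g z hg hz0).mpr ⟨hz1', hh⟩⟩
      have h1 : Real.sqrt (1 + g ^ 2) ≤ g + 1 := by
        rw [show g + 1 = Real.sqrt ((g + 1) ^ 2) by rw [Real.sqrt_sq (by linarith)]]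
        exact Real.sqrt_le_sqrt (by nlinarith)
      linarith
  have hgc : gcConst g = zs := by
    unfold gcConst
    have hseteq : {z : ℝ | Real.sqrt (1 + g ^ 2) < z ∧ ∃ S : ℝ, sigmaZ g z < S ∧ fz g z S = 0}
        = Set.Ioi zs := by
      ext z
      simpa using hset z
    rw [hseteq, csInf_Ioi]
  refine ⟨⟨zs + 1, (hset (zs + 1)).mpr (by linarith)⟩, ?_, ?_⟩
  · intro z hzz
    rw [hgc] at hzz
    obtain ⟨_, S, hσS, hfS⟩ := (hset z).mpr hzz
    have hz0 : 0 < z := by linarith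
    have hc : 0 < g + z := by linarith
    obtain ⟨hσ0, _, _⟩ := sigmaZ_spec g z hc
    refine ⟨S, ⟨hσS, hfS⟩, ?_⟩
    rintro y ⟨hy1, hy2⟩
    exact (fz_strictMonoOn g z hg hc).injOn (Set.mem_Ici.mpr (hσ0.le.trans hy1.le))
      (Set.mem_Ici.mpr (hσ0.le.trans hσS.le)) (by rw [hy2, hfS])
  · intro z hz0 hzlt
    rw [hgc] at hzlt
    have hc : 0 < g + z := by linarith
    obtain ⟨t, ht1, htT, hfσ⟩ := sigma_key g z hg hz0
    obtain ⟨hσ0, _, _⟩ := sigmaZ_spec g z hc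
    have htg : z < t + g := by
      by_contra hle
      push_neg at hle
      have hzg : 1 < z - g := by linarith
      have hTle := mul_log_strictMonoOn.monotoneOn (Set.mem_Ici.mpr ht1.le)
        (Set.mem_Ici.mpr hzg.le) (by linarith : t ≤ z - g)
      rw [htT] at hTle
      have hge : 0 ≤ hfun g z := by
        unfold hfun
        linarith
      have hlt2 := hmono (Set.mem_Ici.mpr (by linarith : g + 1 ≤ z))
        (Set.mem_Ici.mpr hzs_gt.le) hzlt
      rw [hzs0] at hlt2
      linarith
    have hσpos : 0 < fz g z (sigmaZ g z) := by
      rw [hfσ]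
      nlinarith
    have hpos : ∀ S, sigmaZ g z ≤ S → 0 < fz g z S := by
      intro S hS
      have := (fz_strictMonoOn g z hg hc).monotoneOn (Set.mem_Ici.mpr hσ0.le)
        (Set.mem_Ici.mpr (hσ0.le.trans hS)) hS
      linarith
    refine ⟨?_, hpos⟩
    rintro ⟨S, h1, h2⟩
    have := hpos S h1.le
    rw [h2] at this
    exact lt_irrefl 0 this
end

section
/- Fix g > 0 and let g_c = inf{ z > √(1+g²) : there exists Σ > Σ_z with f_z(Σ) = 0 }. Then: (a) the set { z > √(1+g²) : f_z(Σ_z) < 0 } equals the open interval (g_c, ∞); (b) f_{g_c}(Σ_{g_c}) = 0; and (c) g_c > √(1 + g²). -/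
/-- The auxiliary function ψ(z) = log(z−g) − (g+z)/(z−g). -/
noncomputable def psiF (g z : ℝ) : ℝ := Real.log (z - g) - (g + z) / (z - g)

lemma Fmono {c : ℝ} (hc : 0 < c) :
    StrictMono (fun S : ℝ => S - 2 * Real.exp (-(c * S) / 2)) := by
  intro a b hab
  have h : Real.exp (-(c * b) / 2) < Real.exp (-(c * a) / 2) :=
    Real.exp_lt_exp.mpr (by nlinarith)
  simp only
  nlinarith

lemma sigma_spec (g z : ℝ) (hc : 0 < g + z) :
    0 < sigmaZ g z ∧ sigmaZ g z = 2 * Real.exp (-((g + z) * sigmaZ g z) / 2) ∧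
    ∀ S, 0 < S → S = 2 * Real.exp (-((g + z) * S) / 2) → S = sigmaZ g z := by
  set c := g + z with hcdef
  set F : ℝ → ℝ := fun S => S - 2 * Real.exp (-(c * S) / 2) with hF
  have hmono : StrictMono F := Fmono hc
  have hcont : Continuous F := by
    apply continuous_id.sub
    exact (continuous_const.mul (((continuous_const.mul continuous_id').neg).div_const 2).rexp)
  have hF0 : F 0 < 0 := by
    simp only [hF]
    have := Real.exp_pos (-(c * 0) / 2)
    linarith
  have hF2 : 0 < F 2 := by
    have : Real.exp (-(c * 2) / 2) < 1 := by
      rw [← Real.exp_zero]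
      exact Real.exp_lt_exp.mpr (by linarith)
    simp only [hF]
    linarith
  have hIVT := intermediate_value_Icc (by norm_num : (0:ℝ) ≤ 2) hcont.continuousOn
  have h0mem : (0:ℝ) ∈ Set.Icc (F 0) (F 2) := ⟨le_of_lt hF0, le_of_lt hF2⟩
  obtain ⟨Sg, hSgmem, hSg0⟩ := hIVT h0mem
  have hSgeq : Sg = 2 * Real.exp (-(c * Sg) / 2) := by
    have : Sg - 2 * Real.exp (-(c * Sg) / 2) = 0 := hSg0
    linarith
  have hSgpos : 0 < Sg := by
    rw [hSgeq]; positivity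
  have huniq : ∀ S, 0 < S → S = 2 * Real.exp (-(c * S) / 2) → S = Sg := by
    intro S _ hS
    have : F S = F Sg := by simp only [hF]; rw [← hS, ← hSgeq]; ring
    exact hmono.injective this
  have hset : {S : ℝ | 0 < S ∧ S = 2 * Real.exp (-((g + z) * S) / 2)} = {Sg} := by
    ext S
    simp only [Set.mem_setOf_eq, Set.mem_singleton_iff, ← hcdef]
    constructor
    · rintro ⟨h1, h2⟩; exact huniq S h1 h2
    · rintro rfl; exact ⟨hSgpos, hSgeq⟩
  have hsig : sigmaZ g z = Sg := by
    rw [sigmaZ, hset, csInf_singleton]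
  rw [hsig]
  exact ⟨hSgpos, hSgeq, fun S h1 h2 => huniq S h1 h2⟩

lemma fz_sigma (g z : ℝ) (hc : 0 < g + z) :
    fz g z (sigmaZ g z) = (2 / sigmaZ g z + g) ^ 2 - z ^ 2 := by
  obtain ⟨hpos, heq, -⟩ := sigma_spec g z hc
  set S := sigmaZ g z
  have hne : S ≠ 0 := ne_of_gt hpos
  have hexp : Real.exp ((g + z) * S) * S ^ 2 = 4 := by
    have h2 : Real.exp (-((g + z) * S) / 2) = S / 2 := by linarith
    have h3 : Real.exp ((g + z) * S) * (Real.exp (-((g + z) * S) / 2) *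
        Real.exp (-((g + z) * S) / 2)) = 1 := by
      rw [← Real.exp_add, ← Real.exp_add, show (g + z) * S + (-((g + z) * S) / 2 +
        -((g + z) * S) / 2) = 0 by ring, Real.exp_zero]
    rw [h2] at h3
    nlinarith
  have hE : Real.exp ((g + z) * S) = 4 / S ^ 2 := by
    field_simp
    linarith [hexp]
  rw [fz, hE]
  field_simp
  ring

lemma psi_strictMonoOn (g : ℝ) (hg : 0 < g) :
    StrictMonoOn (psiF g) (Set.Ioi g) := by
  intro a ha b hb hab
  simp only [Set.mem_Ioi] at ha hb
  have ha' : 0 < a - g := sub_pos.mpr ha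
  have hb' : 0 < b - g := sub_pos.mpr hb
  have h1 : Real.log (a - g) < Real.log (b - g) := Real.log_lt_log ha' (by linarith)
  have h2 : (g + b) / (b - g) < (g + a) / (a - g) := by
    rw [div_lt_div_iff₀ hb' ha']
    nlinarith
  unfold psiF
  linarith

/-- Existence of the unique root z* of ψ, with z* > g+1, and the sign characterization. -/
lemma psi_root (g : ℝ) (hg : 0 < g) :
    ∃ zs : ℝ, g + 1 < zs ∧ psiF g zs = 0 ∧ ∀ z, g < z → (0 < psiF g z ↔ zs < z) := by
  set E := Real.exp (2 * g + 2) with hE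
  have hE1 : 1 < E := by
    have := Real.add_one_le_exp (2 * g + 2)
    rw [← hE] at this
    linarith
  have hcont : ContinuousOn (psiF g) (Set.Icc (g + 1) (g + E)) := by
    apply ContinuousOn.sub
    · apply ContinuousOn.log (by fun_prop)
      intro x hx
      simp only [Set.mem_Icc] at hx
      intro h
      have : x = g := by linarith
      linarith [hx.1, this]
    · apply ContinuousOn.div (by fun_prop) (by fun_prop)
      intro x hx
      simp only [Set.mem_Icc] at hx
      intro h
      have : x = g := by linarith
      linarith [hx.1, this]
  have hvala : psiF g (g + 1) < 0 := by
    unfold psiF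
    simp only [add_sub_cancel_left]
    rw [Real.log_one]
    norm_num
    linarith
  have hvalb : 0 < psiF g (g + E) := by
    unfold psiF
    have hEpos : (0:ℝ) < E := by rw [hE]; positivity
    rw [show g + E - g = E by ring, show g + (g + E) = 2 * g + E by ring, hE, Real.log_exp,
      ← hE, sub_pos, div_lt_iff₀ hEpos]
    nlinarith
  have hab : g + 1 ≤ g + E := by linarith
  have hIVT := intermediate_value_Icc hab hcont
  obtain ⟨zs, hzsmem, hzs0⟩ := hIVT ⟨le_of_lt hvala, le_of_lt hvalb⟩
  simp only [Set.mem_Icc] at hzsmem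
  have hzsg : g < zs := by linarith [hzsmem.1]
  have hmono := psi_strictMonoOn g hg
  have hzs1 : g + 1 < zs := by
    rcases lt_or_eq_of_le hzsmem.1 with h | h
    · exact h
    · exfalso; rw [← h] at hzs0; linarith
  refine ⟨zs, hzs1, hzs0, fun z hz => ?_⟩
  constructor
  · intro hpsi
    by_contra hle
    push_neg at hle
    rcases lt_or_eq_of_le hle with h | h
    · have := hmono (Set.mem_Ioi.mpr hz) (Set.mem_Ioi.mpr hzsg) h
      linarith
    · rw [h] at hpsi; linarith
  · intro hlt
    have := hmono (Set.mem_Ioi.mpr hzsg) (Set.mem_Ioi.mpr (by linarith : g < z)) hlt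
    linarith

/-- Link between ψ's sign and the comparison of Σ_z with 2/(z−g). -/
lemma sigma_vs (g z : ℝ) (hg : 0 < g) (hzg : g < z) :
    (0 < psiF g z ↔ 2 / (z - g) < sigmaZ g z) ∧
    (psiF g z = 0 ↔ sigmaZ g z = 2 / (z - g)) := by
  have hc : 0 < g + z := by linarith
  have hzg' : 0 < z - g := sub_pos.mpr hzg
  set S0 := 2 / (z - g) with hS0
  have hS0pos : 0 < S0 := by positivity
  obtain ⟨hSgpos, hSgeq, -⟩ := sigma_spec g z hc
  set Sg := sigmaZ g z
  have hmono := Fmono hc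
  have hFSg : Sg - 2 * Real.exp (-((g + z) * Sg) / 2) = 0 := by linarith
  have harg : -((g + z) * S0) / 2 = psiF g z - Real.log (z - g) := by
    rw [hS0]; unfold psiF; field_simp; ring
  have hFS0 : S0 - 2 * Real.exp (-((g + z) * S0) / 2) = S0 * (1 - Real.exp (psiF g z)) := by
    rw [harg, Real.exp_sub, Real.exp_log hzg']
    rw [hS0]
    field_simp
  constructor
  · constructor
    · intro hpsi
      have h1 : 1 < Real.exp (psiF g z) := by
        rw [← Real.exp_zero]
        exact Real.exp_lt_exp.mpr hpsi
      have hFS0neg : S0 - 2 * Real.exp (-((g + z) * S0) / 2) < 0 := by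
        rw [hFS0]; nlinarith
      by_contra hle
      push_neg at hle
      have := hmono.monotone hle
      linarith
    · intro hlt
      have := hmono hlt
      simp only at this
      rw [hFSg] at this
      rw [hFS0] at this
      have h1 : 1 < Real.exp (psiF g z) := by nlinarith
      have : Real.exp 0 < Real.exp (psiF g z) := by rwa [Real.exp_zero]
      exact Real.exp_lt_exp.mp this
  · constructor
    · intro hpsi
      have hFS0z : S0 - 2 * Real.exp (-((g + z) * S0) / 2) = 0 := by
        rw [hFS0, hpsi, Real.exp_zero]; ring
      have : (fun S : ℝ => S - 2 * Real.exp (-((g + z) * S) / 2)) S0 =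
          (fun S : ℝ => S - 2 * Real.exp (-((g + z) * S) / 2)) Sg := by
        simp only; rw [hFS0z, hFSg]
      exact (hmono.injective this).symm
    · intro hSgS0
      have hFS0z : S0 - 2 * Real.exp (-((g + z) * S0) / 2) = 0 := by
        rw [← hSgS0]; exact hFSg
      rw [hFS0] at hFS0z
      have : Real.exp (psiF g z) = 1 := by
        rcases mul_eq_zero.mp hFS0z with h | h
        · exact absurd h (ne_of_gt hS0pos)
        · linarith
      exact (Real.exp_eq_one_iff _).mp this

lemma sqrt_facts (g : ℝ) (hg : 0 < g) :
    Real.sqrt (1 + g ^ 2) < g + 1 ∧ 1 ≤ Real.sqrt (1 + g ^ 2) := by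
  constructor
  · rw [Real.sqrt_lt' (by linarith)]
    nlinarith
  · have h : Real.sqrt 1 ≤ Real.sqrt (1 + g ^ 2) := Real.sqrt_le_sqrt (by nlinarith)
    rwa [Real.sqrt_one] at h

/-- For z > √(1+g²), f_z(Sg_z) < 0 iff z > g and ψ(z) > 0. -/
lemma fz_sigma_neg_iff (g z : ℝ) (hg : 0 < g) (hz : Real.sqrt (1 + g ^ 2) < z) :
    fz g z (sigmaZ g z) < 0 ↔ (g < z ∧ 0 < psiF g z) := by
  obtain ⟨-, hsq1⟩ := sqrt_facts g hg
  have hz1 : 1 < z := lt_of_le_of_lt hsq1 hz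
  have hc : 0 < g + z := by linarith
  obtain ⟨hSgpos, -, -⟩ := sigma_spec g z hc
  rw [fz_sigma g z hc]
  constructor
  · intro hneg
    have hA : 0 < 2 / sigmaZ g z + g := by positivity
    have hAz : 2 / sigmaZ g z + g < z := by nlinarith
    have hgz : g < z := by
      have : 0 < 2 / sigmaZ g z := by positivity
      linarith
    refine ⟨hgz, ?_⟩
    rw [(sigma_vs g z hg hgz).1]
    have h1 : 2 / sigmaZ g z < z - g := by linarith
    rw [div_lt_iff₀ hSgpos] at h1
    rw [div_lt_iff₀ (by linarith : 0 < z - g)]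
    linarith [mul_comm (sigmaZ g z) (z - g)]
  · rintro ⟨hgz, hpsi⟩
    have h1 : 2 / (z - g) < sigmaZ g z := (sigma_vs g z hg hgz).1.mp hpsi
    have hzg' : 0 < z - g := sub_pos.mpr hgz
    rw [div_lt_iff₀ hzg'] at h1
    have h2 : 2 / sigmaZ g z < z - g := by
      rw [div_lt_iff₀ hSgpos]
      linarith [mul_comm (sigmaZ g z) (z - g)]
    have hA : 0 < 2 / sigmaZ g z + g := by positivity
    nlinarith

lemma fz_mono (g z : ℝ) (hg : 0 < g) (hc : 0 < g + z) {a b : ℝ} (ha : 0 ≤ a) (hab : a < b) :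
    fz g z a < fz g z b := by
  unfold fz
  have he : Real.exp ((g + z) * a) < Real.exp ((g + z) * b) :=
    Real.exp_lt_exp.mpr (by nlinarith)
  have hpa : 0 < Real.exp ((g + z) * a) := Real.exp_pos _
  have h1 : (0:ℝ) < 1 + g * a := by nlinarith
  have h2 : 1 + g * a < 1 + g * b := by nlinarith
  have h3 : (1 + g * a) * Real.exp ((g + z) * a) < (1 + g * b) * Real.exp ((g + z) * b) :=
    mul_lt_mul h2 (le_of_lt he) hpa (by linarith)
  linarith

/-- Existence of a root above Σ_z is equivalent to f_z(Sg_z) < 0. -/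
lemma exists_root_iff (g z : ℝ) (hg : 0 < g) (hz : Real.sqrt (1 + g ^ 2) < z) :
    (∃ S : ℝ, sigmaZ g z < S ∧ fz g z S = 0) ↔ fz g z (sigmaZ g z) < 0 := by
  obtain ⟨-, hsq1⟩ := sqrt_facts g hg
  have hz1 : 1 < z := lt_of_le_of_lt hsq1 hz
  have hc : 0 < g + z := by linarith
  obtain ⟨hSgpos, -, -⟩ := sigma_spec g z hc
  constructor
  · rintro ⟨S, hS1, hS2⟩
    have := fz_mono g z hg hc (le_of_lt hSgpos) hS1
    linarith
  · intro hneg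
    set S1 := sigmaZ g z + z ^ 2 with hS1def
    have hSgS1 : sigmaZ g z < S1 := by nlinarith
    have hS1pos : 0 < S1 := by nlinarith
    have hfS1 : 0 < fz g z S1 := by
      unfold fz
      have h1 : (g + z) * S1 + 1 ≤ Real.exp ((g + z) * S1) := Real.add_one_le_exp _
      have h2 : 0 < Real.exp ((g + z) * S1) := Real.exp_pos _
      have h3 : 0 ≤ g * S1 := by positivity
      have h4 : z ^ 2 + 1 ≤ (g + z) * S1 + 1 := by nlinarith
      nlinarith
    have hcont : ContinuousOn (fun S => fz g z S) (Set.Icc (sigmaZ g z) S1) := by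
      apply Continuous.continuousOn
      unfold fz
      fun_prop
    have hIVT := intermediate_value_Icc (le_of_lt hSgS1) hcont
    obtain ⟨S, hSmem, hS0⟩ := hIVT ⟨le_of_lt hneg, le_of_lt hfS1⟩
    simp only [Set.mem_Icc] at hSmem
    refine ⟨S, ?_, hS0⟩
    rcases lt_or_eq_of_le hSmem.1 with h | h
    · exact h
    · exfalso; rw [← h] at hS0; linarith

/-- Remark: (a) { z > √(1+g²) : f_z(Σ_z) < 0 } = (g_c, ∞);
(b) f_{g_c}(Σ_{g_c}) = 0; (c) g_c > √(1+g²). -/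
theorem stmt_11 (g : ℝ) (hg : 0 < g) :
    {z : ℝ | Real.sqrt (1 + g ^ 2) < z ∧ fz g z (sigmaZ g z) < 0} = Set.Ioi (gcConst g) ∧
    fz g (gcConst g) (sigmaZ g (gcConst g)) = 0 ∧
    Real.sqrt (1 + g ^ 2) < gcConst g := by
  obtain ⟨zs, hzs1, hzs0, hsign⟩ := psi_root g hg
  obtain ⟨hsq, hsq1⟩ := sqrt_facts g hg
  have hzsg : g < zs := by linarith
  -- Set A = Ioi zs
  have hA : {z : ℝ | Real.sqrt (1 + g ^ 2) < z ∧ fz g z (sigmaZ g z) < 0} = Set.Ioi zs := by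
    ext z
    simp only [Set.mem_setOf_eq, Set.mem_Ioi]
    constructor
    · rintro ⟨hz1, hz2⟩
      obtain ⟨hgz, hpsi⟩ := (fz_sigma_neg_iff g z hg hz1).mp hz2
      exact (hsign z hgz).mp hpsi
    · intro hlt
      have hz1 : Real.sqrt (1 + g ^ 2) < z := by linarith
      have hgz : g < z := by linarith
      have hpsi : 0 < psiF g z := (hsign z hgz).mpr hlt
      exact ⟨hz1, (fz_sigma_neg_iff g z hg hz1).mpr ⟨hgz, hpsi⟩⟩
  -- Set B (in gcConst) equals A
  have hB : {z : ℝ | Real.sqrt (1 + g ^ 2) < z ∧ ∃ S : ℝ, sigmaZ g z < S ∧ fz g z S = 0} =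
      {z : ℝ | Real.sqrt (1 + g ^ 2) < z ∧ fz g z (sigmaZ g z) < 0} := by
    ext z
    simp only [Set.mem_setOf_eq]
    constructor
    · rintro ⟨h1, h2⟩
      exact ⟨h1, (exists_root_iff g z hg h1).mp h2⟩
    · rintro ⟨h1, h2⟩
      exact ⟨h1, (exists_root_iff g z hg h1).mpr h2⟩
  have hgc : gcConst g = zs := by
    rw [gcConst, hB, hA, csInf_Ioi]
  refine ⟨by rw [hgc, ← hA], ?_, by rw [hgc]; linarith⟩
  -- (b): f_{g_c}(Sg_{g_c}) = 0
  rw [hgc]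
  have hc : 0 < g + zs := by linarith
  have hSgeq : sigmaZ g zs = 2 / (zs - g) := (sigma_vs g zs hg hzsg).2.mp hzs0
  rw [fz_sigma g zs hc, hSgeq]
  have hzsg' : 0 < zs - g := sub_pos.mpr hzsg
  have : 2 / (2 / (zs - g)) = zs - g := by
    field_simp
  rw [this]
  ring
end
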